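/- For the 2×2 amplification matrix G(θ) = M_{01}·e^{-iθ/2} + M_{02}·e^{iθ/2} of the second-order linear compact central scheme, where M_{01} = [[1/2+ν, 1/8-ν²/2],[-1, ν]] and M_{02} = [[1/2-ν, -1/8+ν²/2],[1, -ν]], both eigenvalues of G(θ) have modulus at most 1 for all θ ∈ ℝ when ν = 1/2. -/

import Mathlib

open Matrix

/-- Von Neumann stability of the 2nd-order linear compact central scheme at the
boundary Courant number `ν = 1/2`: every eigenvalue (spectral value) of the
amplification matrix `G(θ) = M₀₁ e^{-iθ/2} + M₀₂ e^{iθ/2}` has modulus at most 1. -/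
theorem stmt18 :
    let ν : ℂ := 1/2
    let M01 : Matrix (Fin 2) (Fin 2) ℂ := !![1/2 + ν, 1/8 - ν^2/2; -1, ν]
    let M02 : Matrix (Fin 2) (Fin 2) ℂ := !![1/2 - ν, -1/8 + ν^2/2; 1, -ν]
    ∀ θ : ℝ, ∀ μ : ℂ,
      μ ∈ spectrum ℂ
        (Complex.exp (-Complex.I * θ / 2) • M01 + Complex.exp (Complex.I * θ / 2) • M02) →
      ‖μ‖ ≤ 1 := by
  intro ν M01 M02 θ μ hμ
  set a : ℂ := Complex.exp (-Complex.I * θ / 2) with ha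
  set b : ℂ := Complex.exp (Complex.I * θ / 2) with hb
  rw [spectrum.mem_iff] at hμ
  rw [Matrix.isUnit_iff_isUnit_det] at hμ
  rw [isUnit_iff_ne_zero, not_not] at hμ
  have hdet : (algebraMap ℂ (Matrix (Fin 2) (Fin 2) ℂ) μ - (a • M01 + b • M02)).det
      = (μ - a) * (μ - (a - b)/2) := by
    rw [Matrix.det_fin_two]
    simp [ν, M01, M02, Matrix.algebraMap_matrix_apply]
    ring
  rw [hdet, mul_eq_zero] at hμ
  have habs : ‖a‖ = 1 := by
    rw [ha, Complex.norm_exp]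
    simp [Complex.div_re, Complex.mul_re]
  rcases hμ with h | h
  · rw [sub_eq_zero] at h
    rw [h, habs]
  · rw [sub_eq_zero] at h
    rw [h]
    have h1 : a = Complex.cos (θ/2) - Complex.sin (θ/2) * Complex.I := by
      rw [ha]
      have : (-Complex.I * θ / 2) = (-(θ/2) : ℂ) * Complex.I := by ring
      rw [this, Complex.exp_mul_I, Complex.cos_neg, Complex.sin_neg]
      ring
    have h2 : b = Complex.cos (θ/2) + Complex.sin (θ/2) * Complex.I := by
      rw [hb]
      have : (Complex.I * θ / 2) = ((θ/2) : ℂ) * Complex.I := by ring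
      rw [this, Complex.exp_mul_I]
    have : (a - b) / 2 = -(Complex.sin (θ/2) * Complex.I) := by
      rw [h1, h2]; ring
    rw [this]
    rw [norm_neg, norm_mul, Complex.norm_I, mul_one]
    have : (Complex.sin (θ/2) : ℂ) = ((Real.sin (θ/2) : ℝ) : ℂ) := by
      rw [Complex.ofReal_sin]; norm_num
    rw [this, Complex.norm_real, Real.norm_eq_abs]
    exact abs_le.mpr ⟨Real.neg_one_le_sin _, Real.sin_le_one _⟩
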